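/- Let R be a commutative ring, let M and N be finitely generated projective R-modules, let d ≥ 0, and let T be a faithfully flat commutative R-algebra. Then the natural T-linear map P^d_R(M, N) ⊗_R T → P^d_T(M ⊗_R T, N ⊗_R T), sending f ⊗ t to t times the base change of f to T, is bijective. -/

import Mathlib

open TensorProduct

universe u

variable (R : Type u) [CommRing R]

/-- The type of families of functions `S ⊗[R] M → S ⊗[R] N`, one for each commutative
`R`-algebra `S` (no naturality required). -/
abbrev RawLaw (M N : Type u) [AddCommGroup M] [Module R M] [AddCommGroup N] [Module R N] :
    Type (u + 1) :=
  ∀ (S : Type u) [CommRing S] [Algebra R S], S ⊗[R] M → S ⊗[R] N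

variable (M N : Type u) [AddCommGroup M] [Module R M] [AddCommGroup N] [Module R N]

/-- Naturality: such a family is a polynomial law (in the sense of Roby) if it commutes
with the maps induced by every `R`-algebra homomorphism. -/
def IsPolyLaw (f : RawLaw R M N) : Prop :=
  ∀ (S S' : Type u) [CommRing S] [Algebra R S] [CommRing S'] [Algebra R S']
    (φ : S →ₐ[R] S') (x : S ⊗[R] M),
    LinearMap.rTensor N φ.toLinearMap (f S x) = f S' (LinearMap.rTensor M φ.toLinearMap x)

/-- Homogeneity of degree `d`. -/
def IsHomog (d : ℕ) (f : RawLaw R M N) : Prop :=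
  ∀ (S : Type u) [CommRing S] [Algebra R S] (s : S) (x : S ⊗[R] M),
    f S (s • x) = s ^ d • f S x

/-- The `R`-module `P^d(M, N)` of polynomial laws from `M` to `N` homogeneous of
degree `d`, as a submodule of the module of raw families. -/
noncomputable def polyLawHomog (d : ℕ) : Submodule R (RawLaw R M N) where
  carrier := {f | IsPolyLaw R M N f ∧ IsHomog R M N d f}
  add_mem' := by
    rintro f g ⟨hf1, hf2⟩ ⟨hg1, hg2⟩
    constructor
    · intro S S' _ _ _ _ φ x
      show LinearMap.rTensor N φ.toLinearMap (f S x + g S x)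
          = f S' (LinearMap.rTensor M φ.toLinearMap x) + g S' (LinearMap.rTensor M φ.toLinearMap x)
      rw [map_add, hf1 S S' φ x, hg1 S S' φ x]
    · intro S _ _ s xx
      show f S (s • xx) + g S (s • xx) = s ^ d • (f S xx + g S xx)
      rw [hf2 S s xx, hg2 S s xx, smul_add]
  zero_mem' := by
    constructor
    · intro S S' _ _ _ _ φ x
      show LinearMap.rTensor N φ.toLinearMap 0 = (0 : S' ⊗[R] N)
      rw [map_zero]
    · intro S _ _ s xx
      show (0 : S ⊗[R] N) = s ^ d • (0 : S ⊗[R] N)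
      rw [smul_zero]
  smul_mem' := by
    rintro r f ⟨hf1, hf2⟩
    constructor
    · intro S S' _ _ _ _ φ x
      show LinearMap.rTensor N φ.toLinearMap (r • f S x)
          = r • f S' (LinearMap.rTensor M φ.toLinearMap x)
      rw [map_smul, hf1 S S' φ x]
    · intro S _ _ s xx
      show r • f S (s • xx) = s ^ d • (r • f S xx)
      rw [hf2 S s xx, smul_comm]

/-- The base change of a (raw) polynomial law along `R → T`: a family for `M ⊗[R] T`
over `T`, whose value over a commutative `T`-algebra `S` is `f_S` under the canonical
identifications `S ⊗[T] (T ⊗[R] M) ≅ S ⊗[R] M` and `S ⊗[T] (T ⊗[R] N) ≅ S ⊗[R] N`. -/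
noncomputable def baseChangeLaw (T : Type u) [CommRing T] [Algebra R T]
    (f : RawLaw R M N) : RawLaw T (T ⊗[R] M) (T ⊗[R] N) :=
  fun S _ _ =>
    letI : Algebra R S := ((algebraMap T S).comp (algebraMap R T)).toAlgebra
    haveI : IsScalarTower R T S := IsScalarTower.of_algebraMap_eq fun _ => rfl
    fun x =>
      (TensorProduct.AlgebraTensorModule.cancelBaseChange R T S S N).symm
        (f S (TensorProduct.AlgebraTensorModule.cancelBaseChange R T S S M x))

/-!
STATEMENT 4: Let R be a commutative ring, let M and N be finitely generated projective
R-modules, let d ≥ 0, and let T be a faithfully flat commutative R-algebra.  Then the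
natural T-linear map P^d_R(M, N) ⊗_R T → P^d_T(M ⊗_R T, N ⊗_R T), sending f ⊗ t to
t times the base change of f to T, is bijective.  (Formalized: there is a `T`-linear
map on the tensor product sending `t ⊗ f` to `t • (base change of f)`, it is injective,
and its range is exactly the submodule of degree-`d` homogeneous polynomial laws
over `T`.) -/

section FreeAux
variable {R' : Type u} [CommRing R'] {M' N' : Type u} [AddCommGroup M'] [Module R' M']
  [AddCommGroup N'] [Module R' N'] {n : ℕ}

/-- Coordinate functional on a base-changed module. -/
noncomputable def coordL (b : Module.Basis (Fin n) R' M') (S : Type u) [CommRing S] [Algebra R' S]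
    (i : Fin n) : S ⊗[R'] M' →ₗ[S] S :=
  LinearMap.liftBaseChange S ((Algebra.linearMap R' S).comp (b.coord i))

lemma coordL_tmul (b : Module.Basis (Fin n) R' M') (S : Type u) [CommRing S] [Algebra R' S]
    (i : Fin n) (s : S) (m : M') :
    coordL b S i (s ⊗ₜ m) = s * algebraMap R' S (b.repr m i) := by
  simp [coordL, Algebra.smul_def, Module.Basis.coord_apply]

lemma coordL_natural (b : Module.Basis (Fin n) R' M') {S S' : Type u} [CommRing S] [Algebra R' S]
    [CommRing S'] [Algebra R' S'] (φ : S →ₐ[R'] S') (i : Fin n) (x : S ⊗[R'] M') :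
    coordL b S' i (LinearMap.rTensor M' φ.toLinearMap x) = φ (coordL b S i x) := by
  induction x using TensorProduct.induction_on with
  | zero => simp
  | tmul s m => simp [coordL_tmul, AlgHom.commutes]
  | add x y hx hy => simp [map_add, hx, hy]

lemma sum_coordL (b : Module.Basis (Fin n) R' M') (S : Type u) [CommRing S] [Algebra R' S]
    (x : S ⊗[R'] M') : ∑ i, coordL b S i x ⊗ₜ[R'] b i = x := by
  induction x using TensorProduct.induction_on with
  | zero => simp
  | tmul s m =>
      have : ∀ i, coordL b S i (s ⊗ₜ[R'] m) ⊗ₜ[R'] b i = s ⊗ₜ[R'] (b.repr m i • b i) := by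
        intro i
        rw [coordL_tmul, mul_comm, ← Algebra.smul_def, smul_tmul]
      rw [Finset.sum_congr rfl (fun i _ => this i), ← tmul_sum, Module.Basis.sum_repr]
  | add x y hx hy =>
      simp only [map_add, add_tmul, Finset.sum_add_distrib, hx, hy]

/-- The universal point `∑ Xᵢ ⊗ bᵢ`. -/
noncomputable def univPt (b : Module.Basis (Fin n) R' M') : MvPolynomial (Fin n) R' ⊗[R'] M' :=
  ∑ i, MvPolynomial.X i ⊗ₜ b i

lemma univPt_def (b : Module.Basis (Fin n) R' M') :
    univPt b = ∑ i, MvPolynomial.X i ⊗ₜ[R'] b i := rfl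

lemma rTensor_univPt (b : Module.Basis (Fin n) R' M') {S : Type u} [CommRing S] [Algebra R' S]
    (φ : MvPolynomial (Fin n) R' →ₐ[R'] S) :
    LinearMap.rTensor M' φ.toLinearMap (univPt b) = ∑ i, φ (MvPolynomial.X i) ⊗ₜ b i := by
  simp [univPt]

/-- Any natural law is determined by its value at the universal point. -/
lemma law_determined {f : RawLaw R' M' N'} (hf : IsPolyLaw R' M' N' f)
    (S : Type u) [CommRing S] [Algebra R' S] (b : Module.Basis (Fin n) R' M') (x : S ⊗[R'] M') :
    f S x = LinearMap.rTensor N'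
      (MvPolynomial.aeval (fun i => coordL b S i x)).toLinearMap
      (f (MvPolynomial (Fin n) R') (univPt b)) := by
  rw [hf (MvPolynomial (Fin n) R') S (MvPolynomial.aeval (fun i => coordL b S i x)) (univPt b)]
  congr 1
  rw [rTensor_univPt]
  simpa using (sum_coordL b S x).symm

/-- Extraction of the coefficient at the exponent `k`. -/
noncomputable def coeffAt (k : Fin n →₀ ℕ) :
    MvPolynomial (Fin n) R' ⊗[R'] N' →ₗ[R'] N' :=
  (TensorProduct.lid R' N').toLinearMap ∘ₗ LinearMap.rTensor N' (MvPolynomial.lcoeff R' k)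

lemma coeffAt_tmul (k : Fin n →₀ ℕ) (p : MvPolynomial (Fin n) R') (w : N') :
    coeffAt k (p ⊗ₜ w) = MvPolynomial.coeff k p • w := by
  simp [coeffAt, MvPolynomial.lcoeff]

/-- Reconstruction of a tensor from its coefficients. -/
lemma exists_coeff_repr (g : MvPolynomial (Fin n) R' ⊗[R'] N') :
    ∃ s : Finset (Fin n →₀ ℕ), (∀ k, k ∉ s → coeffAt (N' := N') k g = 0) ∧
      g = ∑ k ∈ s, MvPolynomial.monomial k 1 ⊗ₜ coeffAt k g := by
  classical
  induction g using TensorProduct.induction_on with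
  | zero => exact ⟨∅, by simp, by simp⟩
  | tmul p w =>
      refine ⟨p.support, ?_, ?_⟩
      · intro k hk
        rw [coeffAt_tmul, MvPolynomial.notMem_support_iff.mp hk, zero_smul]
      · conv_lhs => rw [p.as_sum, sum_tmul]
        refine Finset.sum_congr rfl fun k _ => ?_
        rw [coeffAt_tmul, ← smul_tmul, MvPolynomial.smul_monomial, smul_eq_mul, mul_one]
  | add g₁ g₂ h₁ h₂ =>
      obtain ⟨s₁, hv₁, he₁⟩ := h₁
      obtain ⟨s₂, hv₂, he₂⟩ := h₂
      refine ⟨s₁ ∪ s₂, fun k hk => ?_, ?_⟩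
      · rw [map_add, hv₁ k (fun h => hk (Finset.mem_union_left _ h)),
          hv₂ k (fun h => hk (Finset.mem_union_right _ h)), add_zero]
      · have e₁ : ∑ k ∈ s₁, (MvPolynomial.monomial k 1 : MvPolynomial (Fin n) R') ⊗ₜ[R'] coeffAt k g₁
            = ∑ k ∈ s₁ ∪ s₂, (MvPolynomial.monomial k 1 : MvPolynomial (Fin n) R') ⊗ₜ[R'] coeffAt k g₁ :=
          Finset.sum_subset Finset.subset_union_left fun k _ hk => by
            rw [hv₁ k hk, tmul_zero]
        have e₂ : ∑ k ∈ s₂, (MvPolynomial.monomial k 1 : MvPolynomial (Fin n) R') ⊗ₜ[R'] coeffAt k g₂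
            = ∑ k ∈ s₁ ∪ s₂, (MvPolynomial.monomial k 1 : MvPolynomial (Fin n) R') ⊗ₜ[R'] coeffAt k g₂ :=
          Finset.sum_subset Finset.subset_union_right fun k _ hk => by
            rw [hv₂ k hk, tmul_zero]
        conv_lhs => rw [he₁, he₂]
        rw [e₁, e₂, ← Finset.sum_add_distrib]
        refine Finset.sum_congr rfl fun k _ => ?_
        rw [← tmul_add, map_add]

end FreeAux
section FreeAux2
variable {R' : Type u} [CommRing R'] {M' N' : Type u} [AddCommGroup M'] [Module R' M']
  [AddCommGroup N'] [Module R' N'] {n : ℕ}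

/-- Coefficients of the value at the universal point vanish away from degree `d`. -/
lemma coeffAt_eval_univ_eq_zero {d : ℕ} (b : Module.Basis (Fin n) R' M') {f : RawLaw R' M' N'}
    (hf : f ∈ polyLawHomog R' M' N' d) (k : Fin n →₀ ℕ) (hk : (∑ i, k i) ≠ d) :
    coeffAt k (f (MvPolynomial (Fin n) R') (univPt b)) = 0 := by
  classical
  obtain ⟨hf1, hf2⟩ := hf
  set A := MvPolynomial (Fin n) R' with hA
  let B := Polynomial A
  let ι : A →ₐ[R'] B := IsScalarTower.toAlgHom R' A B
  let ψ' : A →ₐ[R'] B := MvPolynomial.aeval (fun i => Polynomial.X * Polynomial.C (MvPolynomial.X i))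
  have hι : ∀ p : A, ι p = Polynomial.C p := fun p => rfl
  have hψ'mon : ∀ (m : Fin n →₀ ℕ) (r : R'), ψ' (MvPolynomial.monomial m r)
      = Polynomial.monomial (∑ i, m i) (MvPolynomial.monomial m r) := by
    intro m r
    rw [show ψ' (MvPolynomial.monomial m r) = algebraMap R' B r *
        m.prod fun i e => (Polynomial.X * Polynomial.C (MvPolynomial.X i)) ^ e from
      MvPolynomial.aeval_monomial _ _ _]
    rw [Finsupp.prod_fintype _ _ (fun i => pow_zero _)]
    have h1 : ∀ i : Fin n, ((Polynomial.X * Polynomial.C (MvPolynomial.X i) : B)) ^ m i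
        = (Polynomial.X : B) ^ m i * Polynomial.C (MvPolynomial.X i ^ m i) := by
      intro i; rw [mul_pow, map_pow]
    rw [Finset.prod_congr rfl (fun i _ => h1 i), Finset.prod_mul_distrib, ← map_prod,
      Finset.prod_pow_eq_pow_sum]
    have halg : algebraMap R' B r = Polynomial.C (MvPolynomial.C r) := by
      rw [IsScalarTower.algebraMap_apply R' A B]
      rfl
    have hmono : MvPolynomial.C r * ∏ i, MvPolynomial.X i ^ m i
        = (MvPolynomial.monomial m r : A) := by
      rw [MvPolynomial.monomial_eq, Finsupp.prod_fintype _ _ (fun i => pow_zero _)]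
    rw [halg, ← Polynomial.C_mul_X_pow_eq_monomial, ← hmono, map_mul]
    ring
  have key1 : ∀ p : A, MvPolynomial.coeff k (Polynomial.coeff (ψ' p) (∑ i, k i))
      = MvPolynomial.coeff k p := by
    intro p
    induction p using MvPolynomial.induction_on' with
    | monomial m r =>
        rw [hψ'mon, Polynomial.coeff_monomial]
        by_cases h : (∑ i, m i) = (∑ i, k i)
        · rw [if_pos h]
        · rw [if_neg h, MvPolynomial.coeff_monomial,
            if_neg (fun hmk => h (by rw [hmk]))]
          exact MvPolynomial.coeff_zero _
    | add p q hp hq =>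
        rw [map_add, Polynomial.coeff_add, MvPolynomial.coeff_add,
          MvPolynomial.coeff_add, hp, hq]
  -- the linear functional extracting the (∑ k i, k) coefficient
  let ν : B →ₗ[R'] R' := (MvPolynomial.lcoeff R' k) ∘ₗ
    (LinearMap.restrictScalars R' (Polynomial.lcoeff A (∑ i, k i)))
  let Ξ : B ⊗[R'] N' →ₗ[R'] N' :=
    (TensorProduct.lid R' N').toLinearMap ∘ₗ LinearMap.rTensor N' ν
  have hΞψ : ∀ gg : A ⊗[R'] N', Ξ (LinearMap.rTensor N' ψ'.toLinearMap gg) = coeffAt k gg := by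
    intro gg
    induction gg using TensorProduct.induction_on with
    | zero => simp
    | tmul p w =>
        rw [LinearMap.rTensor_tmul, coeffAt_tmul]
        show (TensorProduct.lid R' N') ((LinearMap.rTensor N' ν) (ψ' p ⊗ₜ w)) = _
        rw [LinearMap.rTensor_tmul, TensorProduct.lid_tmul]
        show (MvPolynomial.coeff k (Polynomial.coeff (ψ' p) (∑ i, k i))) • w = _
        rw [key1]
    | add x y hx hy => rw [map_add, map_add, map_add, hx, hy]
  have hsmul : ∀ y : B ⊗[R'] N', (Polynomial.X ^ d : B) • y
      = LinearMap.rTensor N' (LinearMap.mulLeft R' (Polynomial.X ^ d : B)) y := by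
    intro y
    induction y using TensorProduct.induction_on with
    | zero => simp
    | tmul q w => rw [LinearMap.rTensor_tmul, LinearMap.mulLeft_apply, smul_tmul']; rfl
    | add x y hx hy => rw [smul_add, map_add, hx, hy]
  have hΞι : ∀ gg : A ⊗[R'] N',
      Ξ (LinearMap.rTensor N' (LinearMap.mulLeft R' (Polynomial.X ^ d : B))
        (LinearMap.rTensor N' ι.toLinearMap gg)) = 0 := by
    intro gg
    induction gg using TensorProduct.induction_on with
    | zero => simp
    | tmul p w =>
        rw [LinearMap.rTensor_tmul, LinearMap.rTensor_tmul, LinearMap.mulLeft_apply]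
        show (TensorProduct.lid R' N') ((LinearMap.rTensor N' ν) ((Polynomial.X ^ d * ι p) ⊗ₜ w)) = _
        rw [LinearMap.rTensor_tmul, TensorProduct.lid_tmul]
        show (MvPolynomial.coeff k (Polynomial.coeff (Polynomial.X ^ d * ι p) (∑ i, k i))) • w = 0
        rw [hι, mul_comm, Polynomial.C_mul_X_pow_eq_monomial, Polynomial.coeff_monomial,
          if_neg (fun h => hk h.symm), MvPolynomial.coeff_zero, zero_smul]
    | add x y hx hy => rw [map_add, map_add, map_add, hx, hy, add_zero]
  -- homogeneity at the generic scalar X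
  set g := f A (univPt b) with hg
  have hnat1 := hf1 A B ψ' (univPt b)
  have hnat2 := hf1 A B ι (univPt b)
  have hsm : (Polynomial.X : B) • (LinearMap.rTensor M' ι.toLinearMap (univPt b))
      = LinearMap.rTensor M' ψ'.toLinearMap (univPt b) := by
    rw [rTensor_univPt, rTensor_univPt, Finset.smul_sum]
    refine Finset.sum_congr rfl fun i _ => ?_
    rw [smul_tmul']
    congr 1
    show Polynomial.X * ι (MvPolynomial.X i) = ψ' (MvPolynomial.X i)
    rw [hι, show ψ' (MvPolynomial.X i) = Polynomial.X * Polynomial.C (MvPolynomial.X i) from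
      MvPolynomial.aeval_X _ i]
  have hhom := hf2 B (Polynomial.X : B) (LinearMap.rTensor M' ι.toLinearMap (univPt b))
  rw [hsm, ← hnat1, ← hnat2, ← hg] at hhom
  -- hhom : rTensor ψ' g = X ^ d • rTensor ι g
  have : coeffAt k g = Ξ (LinearMap.rTensor N' ψ'.toLinearMap g) := (hΞψ g).symm
  rw [this, hhom, hsmul, hΞι]

/-- Representation of the value at the universal point by its degree-`d` coefficients. -/
lemma eval_univ_repr {d : ℕ} (b : Module.Basis (Fin n) R' M') {f : RawLaw R' M' N'}
    (hf : f ∈ polyLawHomog R' M' N' d) :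
    f (MvPolynomial (Fin n) R') (univPt b)
      = ∑ k ∈ Finset.univ.finsuppAntidiag d,
          (MvPolynomial.monomial k 1 : MvPolynomial (Fin n) R') ⊗ₜ[R']
            coeffAt k (f (MvPolynomial (Fin n) R') (univPt b)) := by
  classical
  obtain ⟨s, hv, he⟩ := exists_coeff_repr (f (MvPolynomial (Fin n) R') (univPt b))
  set g := f (MvPolynomial (Fin n) R') (univPt b) with hg
  have step1 : ∑ k ∈ s, (MvPolynomial.monomial k 1 : MvPolynomial (Fin n) R') ⊗ₜ[R'] coeffAt k g
      = ∑ k ∈ s ∪ Finset.univ.finsuppAntidiag d,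
          (MvPolynomial.monomial k 1 : MvPolynomial (Fin n) R') ⊗ₜ[R'] coeffAt k g :=
    Finset.sum_subset Finset.subset_union_left fun k _ hk => by rw [hv k hk, tmul_zero]
  have step2 : ∑ k ∈ Finset.univ.finsuppAntidiag d,
        (MvPolynomial.monomial k 1 : MvPolynomial (Fin n) R') ⊗ₜ[R'] coeffAt k g
      = ∑ k ∈ s ∪ Finset.univ.finsuppAntidiag d,
          (MvPolynomial.monomial k 1 : MvPolynomial (Fin n) R') ⊗ₜ[R'] coeffAt k g := by
    refine Finset.sum_subset Finset.subset_union_right fun k _ hk => ?_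
    have hkd : (∑ i, k i) ≠ d := by
      intro h
      exact hk (Finset.mem_finsuppAntidiag.mpr ⟨h, Finset.subset_univ _⟩)
    rw [hg, coeffAt_eval_univ_eq_zero b ⟨(by exact hf.1), (by exact hf.2)⟩ k hkd, tmul_zero]
  conv_lhs => rw [he]
  rw [step1]
  exact step2.symm

end FreeAux2
section FreeAux3
variable {R' : Type u} [CommRing R'] {M' N' : Type u} [AddCommGroup M'] [Module R' M']
  [AddCommGroup N'] [Module R' N'] {n : ℕ}

/-- Evaluation of raw laws at a point, as an additive monoid hom. -/
def evalRawHom (R' M' N' : Type u) [CommRing R'] [AddCommGroup M'] [Module R' M']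
    [AddCommGroup N'] [Module R' N'] (S : Type u) [CommRing S] [Algebra R' S]
    (x : S ⊗[R'] M') : RawLaw R' M' N' →+ S ⊗[R'] N' where
  toFun g := g S x
  map_zero' := rfl
  map_add' _ _ := rfl

/-- The homogeneous degree-`d` monomial law with exponent `k` and coefficient `w`. -/
noncomputable def monoLaw (b : Module.Basis (Fin n) R' M') (d : ℕ) (k : Fin n →₀ ℕ)
    (hk : (∑ i, k i) = d) : N' →ₗ[R'] ↥(polyLawHomog R' M' N' d) where
  toFun w := ⟨fun S _ _ x => (∏ i, coordL b S i x ^ k i) ⊗ₜ[R'] w, by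
    constructor
    · intro S S' _ _ _ _ φ x
      show LinearMap.rTensor N' φ.toLinearMap ((∏ i, coordL b S i x ^ k i) ⊗ₜ[R'] w) = _
      rw [LinearMap.rTensor_tmul]
      congr 1
      show φ (∏ i, coordL b S i x ^ k i) = _
      rw [map_prod]
      exact Finset.prod_congr rfl fun i _ => by rw [map_pow, coordL_natural]
    · intro S _ _ s x
      show (∏ i, coordL b S i (s • x) ^ k i) ⊗ₜ[R'] w
        = s ^ d • ((∏ i, coordL b S i x ^ k i) ⊗ₜ[R'] w)
      have h1 : ∀ i : Fin n, coordL b S i (s • x) ^ k i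
          = s ^ k i * coordL b S i x ^ k i := by
        intro i; rw [map_smul, smul_eq_mul, mul_pow]
      rw [Finset.prod_congr rfl (fun i _ => h1 i), Finset.prod_mul_distrib,
        Finset.prod_pow_eq_pow_sum, hk, smul_tmul', smul_eq_mul]⟩
  map_add' w₁ w₂ := by
    refine Subtype.ext (funext fun S => ?_)
    refine funext fun _ => funext fun _ => funext fun x => ?_
    exact tmul_add _ w₁ w₂
  map_smul' r w := by
    refine Subtype.ext (funext fun S => ?_)
    refine funext fun _ => funext fun _ => funext fun x => ?_
    exact tmul_smul r (∏ i, coordL b S i x ^ k i) w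

lemma monoLaw_apply (b : Module.Basis (Fin n) R' M') (d : ℕ) (k : Fin n →₀ ℕ)
    (hk : (∑ i, k i) = d) (w : N') (S : Type u) [CommRing S] [Algebra R' S]
    (x : S ⊗[R'] M') :
    (monoLaw b d k hk w).1 S x = (∏ i, coordL b S i x ^ k i) ⊗ₜ[R'] w := rfl

/-- Evaluation at the universal point as a linear map on `P^d`. -/
noncomputable def evalP (b : Module.Basis (Fin n) R' M') (d : ℕ) :
    ↥(polyLawHomog R' M' N' d) →ₗ[R'] MvPolynomial (Fin n) R' ⊗[R'] N' where
  toFun f := f.1 (MvPolynomial (Fin n) R') (univPt b)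
  map_add' _ _ := rfl
  map_smul' _ _ := rfl

lemma coordL_univPt (b : Module.Basis (Fin n) R' M') (i : Fin n) :
    coordL b (MvPolynomial (Fin n) R') i (univPt b) = MvPolynomial.X i := by
  rw [univPt, map_sum]
  rw [Finset.sum_eq_single i]
  · rw [coordL_tmul]
    simp
  · intro j _ hj
    rw [coordL_tmul]
    simp [Module.Basis.repr_self, Finsupp.single_apply, hj]
  · simp

lemma monoLaw_eval_univ (b : Module.Basis (Fin n) R' M') (d : ℕ) (k : Fin n →₀ ℕ)
    (hk : (∑ i, k i) = d) (w : N') :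
    evalP b d (monoLaw b d k hk w)
      = (MvPolynomial.monomial k 1 : MvPolynomial (Fin n) R') ⊗ₜ[R'] w := by
  show (∏ i, coordL b (MvPolynomial (Fin n) R') i (univPt b) ^ k i) ⊗ₜ[R'] w = _
  congr 1
  rw [Finset.prod_congr rfl (fun i _ => by rw [coordL_univPt]),
    MvPolynomial.monomial_eq, map_one, one_mul,
    Finsupp.prod_fintype _ _ (fun i => pow_zero _)]

/-- Coefficient extraction from a law. -/
noncomputable def cE (b : Module.Basis (Fin n) R' M') (d : ℕ) (k : Fin n →₀ ℕ) :
    ↥(polyLawHomog R' M' N' d) →ₗ[R'] N' :=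
  coeffAt k ∘ₗ evalP b d

/-- The coefficients-of map `G`. -/
noncomputable def gMap (b : Module.Basis (Fin n) R' M') (d : ℕ) :
    ↥(polyLawHomog R' M' N' d) →ₗ[R'] (↥(Finset.univ.finsuppAntidiag d (ι := Fin n)) → N') :=
  LinearMap.pi fun k => cE b d k.1

/-- The law-from-coefficients map `H`. -/
noncomputable def hMap (b : Module.Basis (Fin n) R' M') (d : ℕ) :
    (↥(Finset.univ.finsuppAntidiag d (ι := Fin n)) → N')
      →ₗ[R'] ↥(polyLawHomog R' M' N' d) :=
  ∑ k ∈ (Finset.univ.finsuppAntidiag d (ι := Fin n)).attach,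
    (monoLaw b d k.1 (Finset.mem_finsuppAntidiag.mp k.2).1) ∘ₗ LinearMap.proj k

set_option maxHeartbeats 1000000 in
lemma hMap_gMap (b : Module.Basis (Fin n) R' M') (d : ℕ) (f : ↥(polyLawHomog R' M' N' d)) :
    hMap b d (gMap b d f) = f := by
  classical
  refine Subtype.ext (funext fun S => funext fun _ => funext fun _ => funext fun x => ?_)
  have hsum : ((hMap b d (gMap b d f) : ↥(polyLawHomog R' M' N' d)) :
      RawLaw R' M' N') S x
      = ∑ k ∈ (Finset.univ.finsuppAntidiag d (ι := Fin n)).attach,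
          (∏ i, coordL b S i x ^ (k.1 : Fin n →₀ ℕ) i) ⊗ₜ[R'] cE b d k.1 f := by
    rw [hMap, LinearMap.sum_apply]
    rw [show (((∑ k ∈ (Finset.univ.finsuppAntidiag d (ι := Fin n)).attach,
        ((monoLaw b d k.1 (Finset.mem_finsuppAntidiag.mp k.2).1) ∘ₗ LinearMap.proj k)
          (gMap b d f)) : ↥(polyLawHomog R' M' N' d)) : RawLaw R' M' N')
      = ∑ k ∈ (Finset.univ.finsuppAntidiag d (ι := Fin n)).attach,
        ((((monoLaw b d k.1 (Finset.mem_finsuppAntidiag.mp k.2).1) ∘ₗ LinearMap.proj k)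
          (gMap b d f) : ↥(polyLawHomog R' M' N' d)) : RawLaw R' M' N')
      from AddSubmonoidClass.coe_finset_sum _ _]
    exact (map_sum (evalRawHom R' M' N' S x) _ _).trans
      (Finset.sum_congr rfl fun k _ => rfl)
  rw [hsum]
  have hdet := law_determined (n := n) (f := (f : RawLaw R' M' N')) f.2.1 S b x
  rw [hdet, eval_univ_repr b f.2, map_sum]
  rw [← Finset.sum_attach (Finset.univ.finsuppAntidiag d (ι := Fin n))
    (fun k => LinearMap.rTensor N'
      (MvPolynomial.aeval fun i => coordL b S i x).toLinearMap
      ((MvPolynomial.monomial k 1 : MvPolynomial (Fin n) R') ⊗ₜ[R']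
        coeffAt k ((f : RawLaw R' M' N') (MvPolynomial (Fin n) R') (univPt b))))]
  refine Finset.sum_congr rfl fun k _ => ?_
  rw [LinearMap.rTensor_tmul]
  congr 1
  show _ = (MvPolynomial.aeval fun i => coordL b S i x) (MvPolynomial.monomial k.1 1)
  rw [MvPolynomial.aeval_monomial, map_one, one_mul,
    Finsupp.prod_fintype _ _ (fun i => pow_zero _)]

end FreeAux3
set_option maxHeartbeats 1000000
set_option synthInstance.maxHeartbeats 400000

section BCAux

/-- Naturality of `cancelBaseChange` in the algebra variable. -/
lemma cancelBC_natural (T : Type u) [CommRing T] [Algebra R T] (P : Type u) [AddCommGroup P]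
    [Module R P] {S S' : Type u} [CommRing S] [Algebra R S] [Algebra T S]
    [IsScalarTower R T S] [CommRing S'] [Algebra R S'] [Algebra T S']
    [IsScalarTower R T S'] (φ : S →ₐ[T] S') (x : S ⊗[T] (T ⊗[R] P)) :
    TensorProduct.AlgebraTensorModule.cancelBaseChange R T S' S' P
      (LinearMap.rTensor (T ⊗[R] P) φ.toLinearMap x)
    = LinearMap.rTensor P ((AlgHom.restrictScalars R φ).toLinearMap)
      (TensorProduct.AlgebraTensorModule.cancelBaseChange R T S S P x) := by
  induction x using TensorProduct.induction_on with
  | zero => simp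
  | tmul s y =>
      induction y using TensorProduct.induction_on with
      | zero => simp
      | tmul t p =>
          rw [LinearMap.rTensor_tmul]
          rw [TensorProduct.AlgebraTensorModule.cancelBaseChange_tmul,
            TensorProduct.AlgebraTensorModule.cancelBaseChange_tmul,
            LinearMap.rTensor_tmul]
          show (t • φ s) ⊗ₜ[R] p = φ (t • s) ⊗ₜ[R] p
          rw [map_smul]
      | add y₁ y₂ h₁ h₂ =>
          simp only [tmul_add, map_add, h₁, h₂]
  | add x₁ x₂ h₁ h₂ => rw [map_add, map_add, h₁, h₂, map_add, map_add]

/-- Base change preserves membership in `P^d`. -/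
lemma baseChangeLaw_mem (d : ℕ) (T : Type u) [CommRing T] [Algebra R T] {f : RawLaw R M N}
    (hf : f ∈ polyLawHomog R M N d) :
    baseChangeLaw R M N T f ∈ polyLawHomog T (T ⊗[R] M) (T ⊗[R] N) d := by
  constructor
  · intro S S' _ _ _ _ φ x
    letI : Algebra R S := ((algebraMap T S).comp (algebraMap R T)).toAlgebra
    haveI : IsScalarTower R T S := IsScalarTower.of_algebraMap_eq fun _ => rfl
    letI : Algebra R S' := ((algebraMap T S').comp (algebraMap R T)).toAlgebra
    haveI : IsScalarTower R T S' := IsScalarTower.of_algebraMap_eq fun _ => rfl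
    show LinearMap.rTensor (T ⊗[R] N) φ.toLinearMap
        ((TensorProduct.AlgebraTensorModule.cancelBaseChange R T S S N).symm
          (f S (TensorProduct.AlgebraTensorModule.cancelBaseChange R T S S M x)))
      = (TensorProduct.AlgebraTensorModule.cancelBaseChange R T S' S' N).symm
          (f S' (TensorProduct.AlgebraTensorModule.cancelBaseChange R T S' S' M
            (LinearMap.rTensor (T ⊗[R] M) φ.toLinearMap x)))
    rw [cancelBC_natural R T M φ x, LinearEquiv.eq_symm_apply,
      cancelBC_natural R T N φ _, LinearEquiv.apply_symm_apply]
    exact hf.1 S S' (AlgHom.restrictScalars R φ) _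
  · intro S _ _ s x
    letI : Algebra R S := ((algebraMap T S).comp (algebraMap R T)).toAlgebra
    haveI : IsScalarTower R T S := IsScalarTower.of_algebraMap_eq fun _ => rfl
    show (TensorProduct.AlgebraTensorModule.cancelBaseChange R T S S N).symm
        (f S (TensorProduct.AlgebraTensorModule.cancelBaseChange R T S S M (s • x)))
      = s ^ d • (TensorProduct.AlgebraTensorModule.cancelBaseChange R T S S N).symm
        (f S (TensorProduct.AlgebraTensorModule.cancelBaseChange R T S S M x))
    rw [map_smul, hf.2 S s, map_smul]

/-- The base-change linear map `Φ : T ⊗ P^d(M,N) → RawLaw T`. -/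
noncomputable def bcHom (d : ℕ) (T : Type u) [CommRing T] [Algebra R T] :
    T ⊗[R] ↥(polyLawHomog R M N d) →ₗ[T] RawLaw T (T ⊗[R] M) (T ⊗[R] N) :=
  letI : Module R (RawLaw T (T ⊗[R] M) (T ⊗[R] N)) :=
    Module.compHom _ (algebraMap R T)
  haveI : IsScalarTower R T (RawLaw T (T ⊗[R] M) (T ⊗[R] N)) :=
    ⟨fun r t q => by rw [Algebra.smul_def, mul_smul]; rfl⟩
  LinearMap.liftBaseChange T
    { toFun := fun f => baseChangeLaw R M N T f.1
      map_add' := fun f g => by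
        refine funext fun S => funext fun iS => funext fun iA => ?_
        letI : Algebra R S := ((algebraMap T S).comp (algebraMap R T)).toAlgebra
        haveI : IsScalarTower R T S := IsScalarTower.of_algebraMap_eq fun _ => rfl
        refine funext fun x => ?_
        exact map_add
          ((TensorProduct.AlgebraTensorModule.cancelBaseChange R T S S N).symm) _ _
      map_smul' := fun r f => by
        refine funext fun S => funext fun iS => funext fun iA => ?_
        letI : Algebra R S := ((algebraMap T S).comp (algebraMap R T)).toAlgebra
        haveI : IsScalarTower R T S := IsScalarTower.of_algebraMap_eq fun _ => rfl
        refine funext fun x => ?_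
        show (TensorProduct.AlgebraTensorModule.cancelBaseChange R T S S N).symm
            (r • (f.1 S (TensorProduct.AlgebraTensorModule.cancelBaseChange R T S S M x)))
          = algebraMap R T r • (TensorProduct.AlgebraTensorModule.cancelBaseChange R T S S N).symm
            (f.1 S (TensorProduct.AlgebraTensorModule.cancelBaseChange R T S S M x))
        rw [← algebraMap_smul S r (f.1 S _), map_smul]
        rw [show algebraMap R S r = algebraMap T S (algebraMap R T r) from rfl]
        rw [algebraMap_smul] }

lemma bcHom_tmul (d : ℕ) (T : Type u) [CommRing T] [Algebra R T] (t : T)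
    (f : ↥(polyLawHomog R M N d)) :
    bcHom R M N d T (t ⊗ₜ f) = t • baseChangeLaw R M N T f.1 := by
  rfl

lemma bcHom_mem (d : ℕ) (T : Type u) [CommRing T] [Algebra R T]
    (z : T ⊗[R] ↥(polyLawHomog R M N d)) :
    bcHom R M N d T z ∈ polyLawHomog T (T ⊗[R] M) (T ⊗[R] N) d := by
  induction z using TensorProduct.induction_on with
  | zero => rw [map_zero]; exact Submodule.zero_mem _
  | tmul t f =>
      rw [bcHom_tmul]
      exact Submodule.smul_mem _ t (baseChangeLaw_mem R M N d T f.2)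
  | add z₁ z₂ h₁ h₂ => rw [map_add]; exact Submodule.add_mem _ h₁ h₂

end BCAux

section PullAux
variable {B : Type u} [CommRing B] {V V' W : Type u} [AddCommGroup V] [Module B V]
  [AddCommGroup V'] [Module B V'] [AddCommGroup W] [Module B W]

/-- Pullback of a raw law along a linear map. -/
noncomputable def pullRaw (v : V' →ₗ[B] V) (g : RawLaw B V W) : RawLaw B V' W :=
  fun S _ _ x => g S (v.baseChange S x)

lemma pullRaw_add (v : V' →ₗ[B] V) (g₁ g₂ : RawLaw B V W) :
    pullRaw v (g₁ + g₂) = pullRaw v g₁ + pullRaw v g₂ := rfl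

lemma pullRaw_zero (v : V' →ₗ[B] V) : pullRaw v (0 : RawLaw B V W) = 0 := rfl

lemma pullRaw_smul (v : V' →ₗ[B] V) (t : B) (g : RawLaw B V W) :
    pullRaw v (t • g) = t • pullRaw v g := rfl

lemma pullRaw_mem {d : ℕ} (v : V' →ₗ[B] V) {g : RawLaw B V W}
    (hg : g ∈ polyLawHomog B V W d) : pullRaw v g ∈ polyLawHomog B V' W d := by
  constructor
  · intro S S' _ _ _ _ φ x
    show LinearMap.rTensor W φ.toLinearMap (g S (v.baseChange S x))
      = g S' (v.baseChange S' (LinearMap.rTensor V' φ.toLinearMap x))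
    rw [hg.1 S S' φ]
    congr 1
    induction x using TensorProduct.induction_on with
    | zero => simp
    | tmul s m => simp
    | add x₁ x₂ h₁ h₂ => simp only [map_add, h₁, h₂]
  · intro S _ _ s x
    show g S (v.baseChange S (s • x)) = s ^ d • g S (v.baseChange S x)
    rw [map_smul, hg.2]

/-- Pullback as a linear map on `P^d`. -/
noncomputable def pullLaw (d : ℕ) (v : V' →ₗ[B] V) :
    ↥(polyLawHomog B V W d) →ₗ[B] ↥(polyLawHomog B V' W d) where
  toFun f := ⟨pullRaw v f.1, pullRaw_mem v f.2⟩
  map_add' f g := rfl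
  map_smul' t f := rfl

end PullAux
section FreeT
variable {n : ℕ}

/-- Value of a base-changed law at the universal point: coefficient computation. -/
lemma bcLaw_eval_coeff (b : Module.Basis (Fin n) R M) (d : ℕ) (T : Type u) [CommRing T]
    [Algebra R T] (f : ↥(polyLawHomog R M N d)) (k : Fin n →₀ ℕ) :
    coeffAt k (baseChangeLaw R M N T f.1 (MvPolynomial (Fin n) T)
        (univPt (b.baseChange T)))
      = (1 : T) ⊗ₜ[R] cE (N' := N) b d k f := by
  letI : Algebra R (MvPolynomial (Fin n) T) :=
    ((algebraMap T (MvPolynomial (Fin n) T)).comp (algebraMap R T)).toAlgebra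
  letI : Module R (MvPolynomial (Fin n) T) := Algebra.toModule
  haveI : IsScalarTower R T (MvPolynomial (Fin n) T) :=
    IsScalarTower.of_algebraMap_eq fun _ => rfl
  haveI : IsScalarTower R (MvPolynomial (Fin n) T) (MvPolynomial (Fin n) T) :=
    IsScalarTower.right
  have hψcoeff : ∀ (p : MvPolynomial (Fin n) R) (m : Fin n →₀ ℕ),
      MvPolynomial.coeff m
        ((MvPolynomial.aeval (MvPolynomial.X : Fin n → MvPolynomial (Fin n) T)) p)
        = algebraMap R T (MvPolynomial.coeff m p) := by
    intro p m
    have hmap : (MvPolynomial.aeval (MvPolynomial.X : Fin n → MvPolynomial (Fin n) T)) p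
        = MvPolynomial.map (algebraMap R T) p := by
      induction p using MvPolynomial.induction_on' with
      | monomial u a =>
          rw [MvPolynomial.aeval_monomial, MvPolynomial.map_monomial,
            IsScalarTower.algebraMap_apply R T (MvPolynomial (Fin n) T),
            MvPolynomial.algebraMap_eq, MvPolynomial.monomial_eq]
      | add p q hp hq => rw [map_add, map_add, hp, hq]
    rw [hmap, MvPolynomial.coeff_map]
  have hcu : TensorProduct.AlgebraTensorModule.cancelBaseChange R T (MvPolynomial (Fin n) T)
      (MvPolynomial (Fin n) T) M (univPt (b.baseChange T))
      = LinearMap.rTensor M (MvPolynomial.aeval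
          (MvPolynomial.X : Fin n → MvPolynomial (Fin n) T)).toLinearMap (univPt b) := by
    rw [rTensor_univPt, univPt_def, map_sum]
    refine Finset.sum_congr rfl fun i _ => ?_
    rw [Module.Basis.baseChange_apply, TensorProduct.AlgebraTensorModule.cancelBaseChange_tmul,
      one_smul, MvPolynomial.aeval_X]
  have hbc : baseChangeLaw R M N T f.1 (MvPolynomial (Fin n) T) (univPt (b.baseChange T))
      = (TensorProduct.AlgebraTensorModule.cancelBaseChange R T (MvPolynomial (Fin n) T)
          (MvPolynomial (Fin n) T) N).symm
        (LinearMap.rTensor N (MvPolynomial.aeval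
          (MvPolynomial.X : Fin n → MvPolynomial (Fin n) T)).toLinearMap
          (f.1 (MvPolynomial (Fin n) R) (univPt b))) := by
    show (TensorProduct.AlgebraTensorModule.cancelBaseChange R T (MvPolynomial (Fin n) T)
          (MvPolynomial (Fin n) T) N).symm
        (f.1 (MvPolynomial (Fin n) T)
          (TensorProduct.AlgebraTensorModule.cancelBaseChange R T (MvPolynomial (Fin n) T)
            (MvPolynomial (Fin n) T) M (univPt (b.baseChange T)))) = _
    rw [hcu, ← f.2.1 (MvPolynomial (Fin n) R) (MvPolynomial (Fin n) T)
      (MvPolynomial.aeval (MvPolynomial.X : Fin n → MvPolynomial (Fin n) T)) (univPt b)]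
  rw [hbc]
  have hBL : ∀ g : MvPolynomial (Fin n) R ⊗[R] N,
      coeffAt k ((TensorProduct.AlgebraTensorModule.cancelBaseChange R T
          (MvPolynomial (Fin n) T) (MvPolynomial (Fin n) T) N).symm
        (LinearMap.rTensor N (MvPolynomial.aeval
          (MvPolynomial.X : Fin n → MvPolynomial (Fin n) T)).toLinearMap g))
      = (1 : T) ⊗ₜ[R] coeffAt k g := by
    intro g
    induction g using TensorProduct.induction_on with
    | zero => simp
    | tmul p w =>
        rw [LinearMap.rTensor_tmul,
          TensorProduct.AlgebraTensorModule.cancelBaseChange_symm_tmul,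
          coeffAt_tmul, coeffAt_tmul]
        show MvPolynomial.coeff k ((MvPolynomial.aeval
            (MvPolynomial.X : Fin n → MvPolynomial (Fin n) T)) p) • ((1 : T) ⊗ₜ[R] w) = _
        rw [hψcoeff p k, algebraMap_smul, ← tmul_smul]
    | add g₁ g₂ h₁ h₂ => simp only [map_add, h₁, h₂, tmul_add]
  rw [hBL]
  rfl

/-- Value of a base-changed monomial law at the universal point. -/
lemma bcLaw_eval_mono (b : Module.Basis (Fin n) R M) (d : ℕ) (T : Type u) [CommRing T]
    [Algebra R T] (k : Fin n →₀ ℕ) (hk : (∑ i, k i) = d) (w0 : N) :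
    baseChangeLaw R M N T (monoLaw (N' := N) b d k hk w0).1 (MvPolynomial (Fin n) T)
        (univPt (b.baseChange T))
      = (MvPolynomial.monomial k 1 : MvPolynomial (Fin n) T) ⊗ₜ[T] ((1 : T) ⊗ₜ[R] w0) := by
  letI : Algebra R (MvPolynomial (Fin n) T) :=
    ((algebraMap T (MvPolynomial (Fin n) T)).comp (algebraMap R T)).toAlgebra
  letI : Module R (MvPolynomial (Fin n) T) := Algebra.toModule
  haveI : IsScalarTower R T (MvPolynomial (Fin n) T) :=
    IsScalarTower.of_algebraMap_eq fun _ => rfl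
  haveI : IsScalarTower R (MvPolynomial (Fin n) T) (MvPolynomial (Fin n) T) :=
    IsScalarTower.right
  have hψmono : (MvPolynomial.aeval (MvPolynomial.X : Fin n → MvPolynomial (Fin n) T))
      ((MvPolynomial.monomial k 1 : MvPolynomial (Fin n) R))
      = (MvPolynomial.monomial k 1 : MvPolynomial (Fin n) T) := by
    rw [MvPolynomial.aeval_monomial,
      IsScalarTower.algebraMap_apply R T (MvPolynomial (Fin n) T),
      MvPolynomial.algebraMap_eq, map_one, MvPolynomial.monomial_eq, map_one]
  have hcu : TensorProduct.AlgebraTensorModule.cancelBaseChange R T (MvPolynomial (Fin n) T)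
      (MvPolynomial (Fin n) T) M (univPt (b.baseChange T))
      = LinearMap.rTensor M (MvPolynomial.aeval
          (MvPolynomial.X : Fin n → MvPolynomial (Fin n) T)).toLinearMap (univPt b) := by
    rw [rTensor_univPt, univPt_def, map_sum]
    refine Finset.sum_congr rfl fun i _ => ?_
    rw [Module.Basis.baseChange_apply, TensorProduct.AlgebraTensorModule.cancelBaseChange_tmul,
      one_smul, MvPolynomial.aeval_X]
  show (TensorProduct.AlgebraTensorModule.cancelBaseChange R T (MvPolynomial (Fin n) T)
        (MvPolynomial (Fin n) T) N).symm
      ((monoLaw (N' := N) b d k hk w0).1 (MvPolynomial (Fin n) T)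
        (TensorProduct.AlgebraTensorModule.cancelBaseChange R T (MvPolynomial (Fin n) T)
          (MvPolynomial (Fin n) T) M (univPt (b.baseChange T)))) = _
  rw [hcu, ← (monoLaw (N' := N) b d k hk w0).2.1 (MvPolynomial (Fin n) R)
    (MvPolynomial (Fin n) T)
    (MvPolynomial.aeval (MvPolynomial.X : Fin n → MvPolynomial (Fin n) T)) (univPt b)]
  rw [show (monoLaw (N' := N) b d k hk w0).1 (MvPolynomial (Fin n) R) (univPt b)
      = (MvPolynomial.monomial k 1 : MvPolynomial (Fin n) R) ⊗ₜ[R] w0 from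
    monoLaw_eval_univ b d k hk w0]
  rw [LinearMap.rTensor_tmul]
  show (TensorProduct.AlgebraTensorModule.cancelBaseChange R T (MvPolynomial (Fin n) T)
        (MvPolynomial (Fin n) T) N).symm
      ((MvPolynomial.aeval (MvPolynomial.X : Fin n → MvPolynomial (Fin n) T))
        ((MvPolynomial.monomial k 1 : MvPolynomial (Fin n) R)) ⊗ₜ[R] w0) = _
  rw [hψmono, TensorProduct.AlgebraTensorModule.cancelBaseChange_symm_tmul]

/-- Coefficients of the value of `Φ z` at the universal point. -/
lemma bcHom_eval_coeff (b : Module.Basis (Fin n) R M) (d : ℕ) (T : Type u) [CommRing T]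
    [Algebra R T] (k : Fin n →₀ ℕ) (z : T ⊗[R] ↥(polyLawHomog R M N d)) :
    coeffAt k (bcHom R M N d T z (MvPolynomial (Fin n) T) (univPt (b.baseChange T)))
      = LinearMap.lTensor T (cE (N' := N) b d k) z := by
  induction z using TensorProduct.induction_on with
  | zero =>
      rw [map_zero, map_zero]
      exact map_zero _
  | add z₁ z₂ h₁ h₂ =>
      have e : bcHom R M N d T (z₁ + z₂) (MvPolynomial (Fin n) T) (univPt (b.baseChange T))
          = bcHom R M N d T z₁ (MvPolynomial (Fin n) T) (univPt (b.baseChange T))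
            + bcHom R M N d T z₂ (MvPolynomial (Fin n) T) (univPt (b.baseChange T)) := by
        rw [map_add]; rfl
      rw [e, map_add, h₁, h₂, map_add]
  | tmul t f =>
      rw [bcHom_tmul]
      have h0 : (t • baseChangeLaw R M N T f.1) (MvPolynomial (Fin n) T)
          (univPt (b.baseChange T))
          = t • (baseChangeLaw R M N T f.1 (MvPolynomial (Fin n) T)
              (univPt (b.baseChange T))) := rfl
      rw [h0, map_smul, bcLaw_eval_coeff R M N b d T f k, LinearMap.lTensor_tmul,
        smul_tmul', smul_eq_mul, mul_one]

/-- Value of `Φ` applied to a tensored monomial law, at the universal point. -/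
lemma bcHom_mono_eval (b : Module.Basis (Fin n) R M) (d : ℕ) (T : Type u) [CommRing T]
    [Algebra R T] (k : Fin n →₀ ℕ) (hk : (∑ i, k i) = d) (w : T ⊗[R] N) :
    bcHom R M N d T (LinearMap.lTensor T (monoLaw (N' := N) b d k hk) w)
        (MvPolynomial (Fin n) T) (univPt (b.baseChange T))
      = (MvPolynomial.monomial k 1 : MvPolynomial (Fin n) T) ⊗ₜ[T] w := by
  induction w using TensorProduct.induction_on with
  | zero => rw [map_zero, map_zero, tmul_zero]; rfl
  | add w₁ w₂ h₁ h₂ =>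
      have e : bcHom R M N d T (LinearMap.lTensor T (monoLaw (N' := N) b d k hk) (w₁ + w₂))
          (MvPolynomial (Fin n) T) (univPt (b.baseChange T))
          = bcHom R M N d T (LinearMap.lTensor T (monoLaw (N' := N) b d k hk) w₁)
              (MvPolynomial (Fin n) T) (univPt (b.baseChange T))
            + bcHom R M N d T (LinearMap.lTensor T (monoLaw (N' := N) b d k hk) w₂)
              (MvPolynomial (Fin n) T) (univPt (b.baseChange T)) := by
        rw [map_add, map_add]; rfl
      rw [e, h₁, h₂, tmul_add]
  | tmul t w0 =>
      rw [LinearMap.lTensor_tmul, bcHom_tmul]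
      have h0 : (t • baseChangeLaw R M N T (monoLaw (N' := N) b d k hk w0).1)
          (MvPolynomial (Fin n) T) (univPt (b.baseChange T))
          = t • (baseChangeLaw R M N T (monoLaw (N' := N) b d k hk w0).1
              (MvPolynomial (Fin n) T) (univPt (b.baseChange T))) := rfl
      rw [h0, bcLaw_eval_mono R M N b d T k hk w0, smul_tmul', smul_tmul, smul_tmul',
        smul_eq_mul, mul_one]

end FreeT
section FreeBij
variable {n : ℕ}

/-- `Φ` is injective when `M` is free with finite basis. -/
lemma bcHom_injective_of_basis (b : Module.Basis (Fin n) R M) (d : ℕ) (T : Type u)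
    [CommRing T] [Algebra R T] : Function.Injective (bcHom R M N d T) := by
  classical
  suffices hker : ∀ z, bcHom R M N d T z = 0 → z = 0 by
    intro z₁ z₂ h
    exact sub_eq_zero.mp (hker (z₁ - z₂) (by rw [sub_eq_add_neg, map_add, h, ← map_add, add_neg_cancel, map_zero]))
  intro z hz
  have hcoeff : ∀ k : Fin n →₀ ℕ, LinearMap.lTensor T (cE (N' := N) b d k) z = 0 := by
    intro k
    rw [← bcHom_eval_coeff R M N b d T k z, hz]
    exact map_zero _
  have hz2 : LinearMap.lTensor T (gMap (N' := N) b d) z = 0 := by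
    have hp : ∀ (w : T ⊗[R] (↥(Finset.univ.finsuppAntidiag d (ι := Fin n)) → N))
        (k : ↥(Finset.univ.finsuppAntidiag d (ι := Fin n))),
        TensorProduct.piRight R T T
          (fun _ : ↥(Finset.univ.finsuppAntidiag d (ι := Fin n)) => N) w k
          = LinearMap.lTensor T (LinearMap.proj k) w := by
      intro w k
      induction w using TensorProduct.induction_on with
      | zero => simp
      | tmul t c => simp
      | add w₁ w₂ h₁ h₂ =>
          rw [map_add, map_add]
          exact congrArg₂ (· + ·) h₁ h₂
    have hzero : TensorProduct.piRight R T T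
        (fun _ : ↥(Finset.univ.finsuppAntidiag d (ι := Fin n)) => N)
        (LinearMap.lTensor T (gMap (N' := N) b d) z) = 0 := by
      funext k
      rw [hp, ← LinearMap.lTensor_comp_apply]
      have hpg : (LinearMap.proj k) ∘ₗ (gMap (N' := N) b d) = cE (N' := N) b d k.1 := rfl
      rw [hpg, hcoeff]
      rfl
    exact (LinearEquiv.map_eq_zero_iff _).mp hzero
  have hcomp : (hMap (N' := N) b d) ∘ₗ (gMap (N' := N) b d) = LinearMap.id :=
    LinearMap.ext (hMap_gMap b d)
  calc z = LinearMap.lTensor T ((hMap (N' := N) b d) ∘ₗ (gMap (N' := N) b d)) z := by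
        rw [hcomp, LinearMap.lTensor_id, LinearMap.id_apply]
    _ = LinearMap.lTensor T (hMap (N' := N) b d)
        (LinearMap.lTensor T (gMap (N' := N) b d) z) := by
        rw [LinearMap.lTensor_comp, LinearMap.comp_apply]
    _ = 0 := by rw [hz2, map_zero]

/-- `Φ` has range `P^d` when `M` is free with finite basis. -/
lemma bcHom_range_of_basis (b : Module.Basis (Fin n) R M) (d : ℕ) (T : Type u)
    [CommRing T] [Algebra R T] :
    Set.range (bcHom R M N d T) = ↑(polyLawHomog T (T ⊗[R] M) (T ⊗[R] N) d) := by
  classical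
  apply Set.Subset.antisymm
  · rintro _ ⟨z, rfl⟩
    exact bcHom_mem R M N d T z
  · intro g hg
    set z : T ⊗[R] ↥(polyLawHomog R M N d) :=
      ∑ k ∈ (Finset.univ.finsuppAntidiag d (ι := Fin n)).attach,
        LinearMap.lTensor T (monoLaw (N' := N) b d k.1 (Finset.mem_finsuppAntidiag.mp k.2).1)
          (coeffAt k.1 (g (MvPolynomial (Fin n) T) (univPt (b.baseChange T)))) with hzdef
    refine ⟨z, ?_⟩
    have hmem := bcHom_mem R M N d T z
    have heval : bcHom R M N d T z (MvPolynomial (Fin n) T) (univPt (b.baseChange T))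
        = g (MvPolynomial (Fin n) T) (univPt (b.baseChange T)) := by
      rw [hzdef, map_sum]
      refine ((map_sum (evalRawHom T (T ⊗[R] M) (T ⊗[R] N) (MvPolynomial (Fin n) T)
        (univPt (b.baseChange T))) _ _).trans ?_)
      rw [Finset.sum_congr rfl (fun k _ => bcHom_mono_eval R M N b d T k.1
        (Finset.mem_finsuppAntidiag.mp k.2).1 _)]
      rw [Finset.sum_attach _ (fun k => (MvPolynomial.monomial k 1 : MvPolynomial (Fin n) T)
        ⊗ₜ[T] coeffAt k (g (MvPolynomial (Fin n) T) (univPt (b.baseChange T))))]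
      exact (eval_univ_repr (b.baseChange T) hg).symm
    refine funext fun S => funext fun _ => funext fun _ => funext fun x => ?_
    rw [law_determined (R' := T) hmem.1 S (b.baseChange T) x,
      law_determined (R' := T) hg.1 S (b.baseChange T) x, heval]

end FreeBij

section PullCompat
variable (M₂ : Type u) [AddCommGroup M₂] [Module R M₂]

lemma baseChangeLaw_pull (T : Type u) [CommRing T] [Algebra R T] (v : M₂ →ₗ[R] M)
    (f : RawLaw R M N) :
    baseChangeLaw R M₂ N T (pullRaw v f)
      = pullRaw (v.baseChange T) (baseChangeLaw R M N T f) := by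
  refine funext fun S => funext fun iS => funext fun iA => ?_
  letI : Algebra R S := ((algebraMap T S).comp (algebraMap R T)).toAlgebra
  haveI : IsScalarTower R T S := IsScalarTower.of_algebraMap_eq fun _ => rfl
  refine funext fun x => ?_
  have hx : TensorProduct.AlgebraTensorModule.cancelBaseChange R T S S M
      (((v.baseChange T).baseChange S) x)
      = (v.baseChange S) (TensorProduct.AlgebraTensorModule.cancelBaseChange R T S S M₂ x) := by
    induction x using TensorProduct.induction_on with
    | zero => simp
    | tmul s y =>
        induction y using TensorProduct.induction_on with
        | zero => simp
        | tmul t m =>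
            rw [LinearMap.baseChange_tmul, LinearMap.baseChange_tmul,
              TensorProduct.AlgebraTensorModule.cancelBaseChange_tmul,
              TensorProduct.AlgebraTensorModule.cancelBaseChange_tmul,
              LinearMap.baseChange_tmul]
        | add y₁ y₂ h₁ h₂ => simp only [tmul_add, map_add, h₁, h₂]
    | add x₁ x₂ h₁ h₂ => simp only [map_add, h₁, h₂]
  show (TensorProduct.AlgebraTensorModule.cancelBaseChange R T S S N).symm
      (f S (v.baseChange S (TensorProduct.AlgebraTensorModule.cancelBaseChange R T S S M₂ x)))
    = (TensorProduct.AlgebraTensorModule.cancelBaseChange R T S S N).symm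
      (f S (TensorProduct.AlgebraTensorModule.cancelBaseChange R T S S M
        (((v.baseChange T).baseChange S) x)))
  rw [hx]

lemma bcHom_pull (d : ℕ) (T : Type u) [CommRing T] [Algebra R T] (v : M₂ →ₗ[R] M)
    (z : T ⊗[R] ↥(polyLawHomog R M N d)) :
    bcHom R M₂ N d T (LinearMap.lTensor T (pullLaw (W := N) d v) z)
      = pullRaw (v.baseChange T) (bcHom R M N d T z) := by
  induction z using TensorProduct.induction_on with
  | zero =>
      rw [map_zero, map_zero, map_zero]
      exact (pullRaw_zero _).symm
  | tmul t f =>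
      rw [LinearMap.lTensor_tmul, bcHom_tmul, bcHom_tmul]
      have h1 : ((pullLaw (W := N) d v f) : RawLaw R M₂ N) = pullRaw v f.1 := rfl
      rw [h1, baseChangeLaw_pull R M N M₂ T v f.1]
      exact (pullRaw_smul _ t _).symm
  | add z₁ z₂ h₁ h₂ =>
      rw [map_add, map_add, h₁, h₂, map_add]
      exact (pullRaw_add _ _ _).symm

end PullCompat
theorem stmt_4 [Module.Finite R M] [Module.Projective R M]
    [Module.Finite R N] [Module.Projective R N] (d : ℕ)
    (T : Type u) [CommRing T] [Algebra R T] [Module.FaithfullyFlat R T] :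
    ∃ Φ : T ⊗[R] (polyLawHomog R M N d) →ₗ[T] RawLaw T (T ⊗[R] M) (T ⊗[R] N),
      (∀ (t : T) (f : polyLawHomog R M N d),
        Φ (t ⊗ₜ[R] f) = t • baseChangeLaw R M N T f.1) ∧
      Function.Injective Φ ∧
      Set.range Φ = ↑(polyLawHomog T (T ⊗[R] M) (T ⊗[R] N) d) := by
  classical
  obtain ⟨n, π, hπ⟩ := Module.Finite.exists_fin' R M
  obtain ⟨σ, hσ⟩ := Module.projective_lifting_property π LinearMap.id hπ
  refine ⟨bcHom R M N d T, fun t f => bcHom_tmul R M N d T t f, ?_, ?_⟩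
  · -- injectivity
    suffices hker : ∀ z, bcHom R M N d T z = 0 → z = 0 by
      intro z₁ z₂ h
      exact sub_eq_zero.mp (hker (z₁ - z₂) (by rw [sub_eq_add_neg, map_add, h, ← map_add, add_neg_cancel, map_zero]))
    intro z hz
    have h1 : LinearMap.lTensor T (pullLaw (W := N) d π) z = 0 := by
      apply bcHom_injective_of_basis R (Fin n → R) N (Pi.basisFun R (Fin n)) d T
      rw [map_zero, bcHom_pull R M N (Fin n → R) d T π z, hz]
      exact pullRaw_zero _
    have hco : (pullLaw (W := N) d σ) ∘ₗ (pullLaw (W := N) d π) = LinearMap.id := by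
      refine LinearMap.ext fun f => ?_
      refine Subtype.ext (funext fun S => funext fun _ => funext fun _ => funext fun x => ?_)
      show f.1 S ((π.baseChange S) ((σ.baseChange S) x)) = f.1 S x
      have hps : (π.baseChange S) ((σ.baseChange S) x) = x := by
        rw [← LinearMap.comp_apply, ← LinearMap.baseChange_comp, hσ,
          LinearMap.baseChange_id, LinearMap.id_apply]
      rw [hps]
    calc z = LinearMap.lTensor T ((pullLaw (W := N) d σ) ∘ₗ (pullLaw (W := N) d π)) z := by
          rw [hco, LinearMap.lTensor_id, LinearMap.id_apply]
      _ = LinearMap.lTensor T (pullLaw (W := N) d σ)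
          (LinearMap.lTensor T (pullLaw (W := N) d π) z) := by
          rw [LinearMap.lTensor_comp, LinearMap.comp_apply]
      _ = 0 := by rw [h1, map_zero]
  · -- range
    apply Set.Subset.antisymm
    · rintro _ ⟨z, rfl⟩
      exact bcHom_mem R M N d T z
    · intro g hg
      have hg' : pullRaw (π.baseChange T) g
          ∈ polyLawHomog T (T ⊗[R] (Fin n → R)) (T ⊗[R] N) d :=
        pullRaw_mem (π.baseChange T) hg
      have hg'' : pullRaw (π.baseChange T) g
          ∈ Set.range (bcHom R (Fin n → R) N d T) := by
        rw [bcHom_range_of_basis R (Fin n → R) N (Pi.basisFun R (Fin n)) d T]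
        exact hg'
      obtain ⟨z, hzz⟩ := hg''
      refine ⟨LinearMap.lTensor T (pullLaw (W := N) d σ) z, ?_⟩
      rw [bcHom_pull R (Fin n → R) N M d T σ z, hzz]
      refine funext fun S => funext fun _ => funext fun _ => funext fun x => ?_
      show g S (((π.baseChange T).baseChange S) (((σ.baseChange T).baseChange S) x)) = g S x
      have hps : ((π.baseChange T).baseChange S) (((σ.baseChange T).baseChange S) x) = x := by
        rw [← LinearMap.comp_apply, ← LinearMap.baseChange_comp, ← LinearMap.baseChange_comp,
          hσ, LinearMap.baseChange_id, LinearMap.baseChange_id, LinearMap.id_apply]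
      rw [hps]
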